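/- Let (Γ_n)_{n≥1} be a sequence of graphs where Γ_n is a connected simple graph on n vertices, and suppose that for every n and every nonempty proper subset S of the vertices of Γ_n such that the induced subgraph Γ_n|_S is connected, the induced subgraph Γ_n|_S is isomorphic to Γ_{|S|} and the contraction Γ_n/S is isomorphic to Γ_{n-|S|}. Then either Γ_n is isomorphic to the path graph P_n for every n, or Γ_n is isomorphic to the complete graph K_n for every n. -/

import Mathlib

open SimpleGraph

/-- The contraction `Γ/S`: the simple graph on the vertex set `V ∖ S` in which two
distinct vertices `i, j` are adjacent iff they are joined by a walk in the induced
subgraph `Γ|_{S ∪ {i, j}}`. -/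
def SimpleGraph.contractSet {V : Type*} (G : SimpleGraph V) (S : Set V) :
    SimpleGraph {v : V // v ∉ S} :=
  SimpleGraph.fromRel fun i j =>
    (G.induce (S ∪ {i.1, j.1})).Reachable ⟨i.1, by simp⟩ ⟨j.1, by simp⟩


/-- In a graph with at most 3 vertices, reachability gives a path of length ≤ 2. -/
lemma reach_cases {V : Type*} [Finite V] {G : SimpleGraph V} {x y : V}
    (hV : Nat.card V ≤ 3) (h : G.Reachable x y) :
    x = y ∨ G.Adj x y ∨ ∃ z, G.Adj x z ∧ G.Adj z y := by
  classical
  have : Fintype V := Fintype.ofFinite V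
  obtain ⟨w⟩ := h
  have hp := (w.toPath : G.Path x y).2
  set p := (w.toPath : G.Path x y).1 with hpdef
  have hlt : p.length < Fintype.card V := hp.length_lt
  have hcard : Fintype.card V ≤ 3 := by
    rwa [Nat.card_eq_fintype_card] at hV
  have hl3 : p.length < 3 := lt_of_lt_of_le hlt hcard
  interval_cases hl : p.length
  · left; exact (SimpleGraph.Walk.eq_of_length_eq_zero hl)
  · right; left
    have := p.adj_getVert_succ (by omega : 0 < p.length)
    simpa [hl] using (by
      have h0 : p.getVert 0 = x := p.getVert_zero
      have h1 : p.getVert 1 = y := by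
        have := p.getVert_length
        rw [hl] at this; exact this
      rw [h0, h1] at this; exact this)
  · right; right
    refine ⟨p.getVert 1, ?_, ?_⟩
    · have := p.adj_getVert_succ (by omega : 0 < p.length)
      simpa [p.getVert_zero] using this
    · have := p.adj_getVert_succ (by omega : 1 < p.length)
      have h2 : p.getVert 2 = y := by
        have := p.getVert_length
        rw [hl] at this; exact this
      rwa [h2] at this

lemma induce_singleton_connected {V : Type*} (G : SimpleGraph V) (v : V) :
    (G.induce {v}).Connected := by
  haveI : Nonempty ↥({v} : Set V) := ⟨⟨v, rfl⟩⟩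
  refine ⟨fun x y => ?_⟩
  have hx : x = y := by
    ext
    have h1 : x.1 ∈ ({v} : Set V) := x.2
    have h2 : y.1 ∈ ({v} : Set V) := y.2
    simp only [Set.mem_singleton_iff] at h1 h2
    rw [h1, h2]
  rw [hx]

lemma induce_triple_connected {V : Type*} (G : SimpleGraph V) {a b c : V}
    (hab : G.Adj a b) (hbc : G.Adj b c) :
    (G.induce {a, b, c}).Connected := by
  have key : ∀ x : ↥({a, b, c} : Set V),
      (G.induce {a, b, c}).Reachable x ⟨b, by simp⟩ := by
    rintro ⟨x, hx⟩
    rcases hx with h | h | h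
    · subst h
      exact SimpleGraph.Adj.reachable (by exact hab)
    · subst h
      exact SimpleGraph.Reachable.refl _
    · simp only [Set.mem_singleton_iff] at h; subst h
      exact SimpleGraph.Adj.reachable (by exact hbc.symm)
  haveI : Nonempty ↥({a, b, c} : Set V) := ⟨⟨b, by simp⟩⟩
  exact ⟨fun x y => (key x).trans (key y).symm⟩

lemma complete_of_noP3 {V : Type*} {G : SimpleGraph V}
    (h : ∀ a b c, G.Adj a b → G.Adj b c → a = c ∨ G.Adj a c) :
    ∀ {u w : V} (_ : G.Walk u w), u = w ∨ G.Adj u w := by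
  intro u w p
  induction p with
  | nil => exact Or.inl rfl
  | cons h' q ih =>
    rcases ih with rfl | hadj
    · exact Or.inr h'
    · exact h _ _ _ h' hadj

def isoFin1 (G H : SimpleGraph (Fin 1)) : G ≃g H where
  toEquiv := Equiv.refl _
  map_rel_iff' := by
    intro a b
    constructor <;> intro hh <;> exact absurd (Subsingleton.elim a b) hh.ne

lemma fin2_adj_iff {G : SimpleGraph (Fin 2)} (hG : G.Connected) (x y : Fin 2) :
    G.Adj x y ↔ x ≠ y := by
  constructor
  · exact Adj.ne
  · intro hxy
    have hr := hG.preconnected x y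
    have hc : Nat.card (Fin 2) ≤ 3 := by simp
    rcases reach_cases hc hr with rfl | hadj | ⟨z, h1, h2⟩
    · exact absurd rfl hxy
    · exact hadj
    · exfalso
      have := h1.ne; have := h2.ne
      omega

lemma pathGraph_no_triangle {m : ℕ} {x y z : Fin m}
    (h1 : (pathGraph m).Adj x y) (h2 : (pathGraph m).Adj y z)
    (h3 : (pathGraph m).Adj x z) : False := by
  rw [pathGraph_adj] at h1 h2 h3
  omega

/-- Reversal automorphism of the path graph. -/
def pathGraphRev (m : ℕ) : pathGraph m ≃g pathGraph m where
  toEquiv := (finCongr rfl).trans (Equiv.mk Fin.rev Fin.rev Fin.rev_rev Fin.rev_rev)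
  map_rel_iff' := by
    intro a b
    simp only [Equiv.trans_apply, finCongr_apply, Fin.cast_eq_self, Equiv.coe_fn_mk,
      pathGraph_adj, Fin.val_rev]
    have := a.2; have := b.2
    omega

lemma pathGraph_succ_nbr_zero {m : ℕ} {y : Fin (m + 1)}
    (h : (pathGraph (m+1)).Adj 0 y) : y.val = 1 := by
  rw [pathGraph_adj] at h
  simp at h
  omega



lemma contract_adj_of_adj {V : Type*} (G : SimpleGraph V) (S : Set V)
    (i j : {x // x ∉ S}) (h : G.Adj i.1 j.1) : (G.contractSet S).Adj i j := by
  rw [SimpleGraph.contractSet, SimpleGraph.fromRel_adj]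
  refine ⟨fun hh => h.ne (congrArg Subtype.val hh), Or.inl ?_⟩
  exact SimpleGraph.Adj.reachable (by exact h)

lemma contract_adj_of_via {V : Type*} (G : SimpleGraph V) (S : Set V)
    (i j : {x // x ∉ S}) (v : V) (hij : i ≠ j) (hv : v ∈ S)
    (h1 : G.Adj i.1 v) (h2 : G.Adj v j.1) : (G.contractSet S).Adj i j := by
  rw [SimpleGraph.contractSet, SimpleGraph.fromRel_adj]
  refine ⟨hij, Or.inl ?_⟩
  exact Walk.reachable
    (Walk.cons (by exact h1 : (G.induce (S ∪ {i.1, j.1})).Adj ⟨i.1, by simp⟩ ⟨v, Or.inl hv⟩)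
      (Walk.cons (by exact h2 : (G.induce (S ∪ {i.1, j.1})).Adj ⟨v, Or.inl hv⟩ ⟨j.1, by simp⟩)
        Walk.nil))

lemma card_union_pair_le {V : Type*} (v i j : V) :
    Nat.card ↥(({v} : Set V) ∪ {i, j}) ≤ 3 := by
  rw [Nat.card_coe_set_eq, Set.singleton_union]
  calc (insert v {i, j} : Set V).ncard ≤ ({i, j} : Set V).ncard + 1 := Set.ncard_insert_le _ _
    _ ≤ (({j} : Set V).ncard + 1) + 1 := by
        exact Nat.add_le_add_right (Set.ncard_insert_le _ _) 1
    _ ≤ 3 := by rw [Set.ncard_singleton]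

lemma reach_union_pair {V : Type*} [Finite V] {G : SimpleGraph V} {v i j : V}
    (h : (G.induce (({v} : Set V) ∪ {i, j})).Reachable ⟨i, by simp⟩ ⟨j, by simp⟩) :
    i = j ∨ G.Adj i j ∨ (G.Adj i v ∧ G.Adj v j) := by
  rcases reach_cases (card_union_pair_le v i j) h with heq | hadj | ⟨z, h1, h2⟩
  · exact Or.inl (congrArg Subtype.val heq)
  · exact Or.inr (Or.inl hadj)
  · have ha1 : G.Adj i z.1 := h1
    have ha2 : G.Adj z.1 j := h2
    have hz : z.1 ∈ ({v} : Set V) ∨ z.1 ∈ ({i, j} : Set V) := z.2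
    have hz' : z.1 = v ∨ z.1 = i ∨ z.1 = j := by
      rcases hz with hz | hz
      · exact Or.inl hz
      · rcases hz with hz | hz
        · exact Or.inr (Or.inl hz)
        · exact Or.inr (Or.inr hz)
    rcases hz' with hz | hz | hz
    · rw [hz] at ha1 ha2
      exact Or.inr (Or.inr ⟨ha1, ha2⟩)
    · rw [hz] at ha1
      exact absurd rfl ha1.ne
    · rw [hz] at ha2
      exact absurd rfl ha2.ne

lemma contract_single_adj {V : Type*} [Finite V] (G : SimpleGraph V) (v : V)
    (i j : {x // x ∉ ({v} : Set V)}) :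
    (G.contractSet {v}).Adj i j ↔ i ≠ j ∧
      (G.Adj i.1 j.1 ∨ (G.Adj i.1 v ∧ G.Adj v j.1) ∨ (G.Adj j.1 v ∧ G.Adj v i.1)) := by
  constructor
  · intro h
    rw [SimpleGraph.contractSet, SimpleGraph.fromRel_adj] at h
    obtain ⟨hne, hor⟩ := h
    refine ⟨hne, ?_⟩
    have hij : i.1 ≠ j.1 := fun hh => hne (Subtype.ext hh)
    rcases hor with h | h
    · rcases reach_union_pair h with heq | hadj | hvia
      · exact absurd heq hij
      · exact Or.inl hadj
      · exact Or.inr (Or.inl hvia)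
    · rcases reach_union_pair h with heq | hadj | hvia
      · exact absurd heq.symm hij
      · exact Or.inl hadj.symm
      · exact Or.inr (Or.inr hvia)
  · rintro ⟨hne, h | h | h⟩
    · exact contract_adj_of_adj G _ i j h
    · exact contract_adj_of_via G _ i j v hne rfl h.1 h.2
    · exact ((contract_adj_of_via G _ j i v (Ne.symm hne) rfl h.1 h.2)).symm
/-- If `v` has unique neighbour `a` and `g` maps `a` to the last path vertex, extend to an
iso `G ≃g pathGraph (m+1)`. -/
lemma build_iso {m : ℕ} (G : SimpleGraph (Fin (m + 1))) (v a : Fin (m + 1))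
    (hva : G.Adj v a) (hone : ∀ b, G.Adj v b → b = a)
    (ha : a ∉ ({v} : Set (Fin (m + 1))))
    (g : G.contractSet {v} ≃g pathGraph m)
    (hg : (g ⟨a, ha⟩).val = m - 1) (hm : 1 ≤ m) :
    Nonempty (G ≃g pathGraph (m + 1)) := by
  -- contraction adjacency = plain adjacency
  have hH : ∀ i j : {x // x ∉ ({v} : Set (Fin (m+1)))},
      (G.contractSet {v}).Adj i j ↔ G.Adj i.1 j.1 := by
    intro i j
    rw [contract_single_adj]
    constructor
    · rintro ⟨hne, h | h | h⟩
      · exact h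
      · exfalso
        have e1 : i.1 = a := hone i.1 h.1.symm
        have e2 : j.1 = a := hone j.1 h.2
        exact hne (Subtype.ext (e1.trans e2.symm))
      · exfalso
        have e1 : j.1 = a := hone j.1 h.1.symm
        have e2 : i.1 = a := hone i.1 h.2
        exact hne (Subtype.ext (e2.trans e1.symm))
    · intro h
      exact ⟨fun hh => h.ne (congrArg Subtype.val hh), Or.inl h⟩
  classical
  set φ : Fin (m + 1) → Fin (m + 1) :=
    fun w => if h : w = v then Fin.last m else (g ⟨w, h⟩).castSucc with hφ
  have hinj : Function.Injective φ := by
    intro w1 w2 h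
    by_cases h1 : w1 = v <;> by_cases h2 : w2 = v
    · rw [h1, h2]
    · exfalso
      rw [hφ] at h; simp only [h1, h2, dif_pos, dif_neg, not_false_iff] at h
      have := (g ⟨w2, h2⟩).castSucc.is_lt
      have hval := congrArg Fin.val h
      simp [Fin.val_last] at hval
      have := (g ⟨w2, h2⟩).is_lt
      omega
    · exfalso
      rw [hφ] at h; simp only [h1, h2, dif_pos, dif_neg, not_false_iff] at h
      have hval := congrArg Fin.val h
      simp [Fin.val_last] at hval
      have := (g ⟨w1, h1⟩).is_lt
      omega
    · rw [hφ] at h; simp only [h1, h2, dif_neg, not_false_iff] at h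
      have : (⟨w1, h1⟩ : {x // x ∉ ({v} : Set (Fin (m+1)))}) = ⟨w2, h2⟩ :=
        g.injective (Fin.castSucc_injective m h)
      exact congrArg Subtype.val this
  have hbij : Function.Bijective φ := (Finite.injective_iff_bijective).mp hinj
  refine ⟨⟨Equiv.ofBijective φ hbij, ?_⟩⟩
  intro w1 w2
  show (pathGraph (m+1)).Adj (φ w1) (φ w2) ↔ G.Adj w1 w2
  have hlast : ∀ (w : Fin (m+1)) (hw : ¬ w = v),
      ((pathGraph (m+1)).Adj (Fin.last m) ((g ⟨w, hw⟩).castSucc) ↔ w = a) := by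
    intro w hw
    rw [pathGraph_adj]
    have hlt := (g ⟨w, hw⟩).is_lt
    constructor
    · intro h
      have hval : (g ⟨w, hw⟩).val = m - 1 := by
        simp [Fin.val_last, Fin.coe_castSucc] at h
        omega
      have : (⟨w, hw⟩ : {x // x ∉ ({v} : Set (Fin (m+1)))}) = ⟨a, ha⟩ := by
        apply g.injective
        apply Fin.ext
        rw [hval, hg]
      exact congrArg Subtype.val this
    · intro h
      right
      have heq : (⟨w, hw⟩ : {x // x ∉ ({v} : Set (Fin (m+1)))}) = ⟨a, ha⟩ := Subtype.ext h
      rw [Fin.coe_castSucc, Fin.val_last, heq, hg]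
      omega
  by_cases h1 : w1 = v <;> by_cases h2 : w2 = v
  · subst h1; subst h2
    simp [SimpleGraph.irrefl]
  · subst h1
    rw [hφ]
    simp only [dif_pos, dif_neg, not_false_iff, h2]
    rw [hlast w2 h2]
    constructor
    · intro h; rw [h]; exact hva
    · intro h; exact hone w2 h
  · subst h2
    rw [hφ]
    simp only [dif_pos, dif_neg, not_false_iff, h1]
    rw [SimpleGraph.adj_comm, G.adj_comm]
    rw [hlast w1 h1]
    constructor
    · intro h; rw [h]; exact hva
    · intro h; exact hone w1 h
  · rw [hφ]
    simp only [dif_neg, not_false_iff, h1, h2]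
    have : (pathGraph (m+1)).Adj ((g ⟨w1, h1⟩).castSucc) ((g ⟨w2, h2⟩).castSucc)
        ↔ (pathGraph m).Adj (g ⟨w1, h1⟩) (g ⟨w2, h2⟩) := by
      rw [pathGraph_adj, pathGraph_adj]
      simp [Fin.coe_castSucc]
    rw [this, g.map_rel_iff, hH]
lemma pathGraphRev_apply_val {m : ℕ} (t : Fin m) :
    ((pathGraphRev m) t).val = m - (t.val + 1) := by
  simp [pathGraphRev, Fin.val_rev]

lemma exists_neighbor {m : ℕ} (hm : 1 ≤ m) {G : SimpleGraph (Fin (m + 1))}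
    (hG : G.Connected) (v : Fin (m + 1)) : ∃ a, G.Adj v a := by
  set u : Fin (m + 1) := if v = ⟨0, by omega⟩ then ⟨1, by omega⟩ else ⟨0, by omega⟩ with hu
  have hvu : v ≠ u := by
    by_cases h : v = (⟨0, by omega⟩ : Fin (m + 1))
    · rw [hu]; simp only [h, if_pos]
      intro hh
      have := congrArg Fin.val hh
      simp at this
    · rw [hu]; simp only [if_neg h]
      exact h
  obtain ⟨p⟩ := hG.preconnected v u
  have hlen : p.length ≠ 0 := fun h => hvu (SimpleGraph.Walk.eq_of_length_eq_zero h)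
  have := p.adj_getVert_succ (by omega : 0 < p.length)
  rw [p.getVert_zero] at this
  exact ⟨_, this⟩

lemma step {m : ℕ} (hm : 3 ≤ m) (G : SimpleGraph (Fin (m + 1))) (hG : G.Connected)
    (htf : ∀ x y z, G.Adj x y → G.Adj y z → G.Adj x z → False)
    (hciso : ∀ v : Fin (m + 1), Nonempty (G.contractSet {v} ≃g pathGraph m)) :
    Nonempty (G ≃g pathGraph (m + 1)) := by
  -- max degree ≤ 2
  have hdeg : ∀ v a b c : Fin (m + 1), G.Adj v a → G.Adj v b → G.Adj v c →
      a = b ∨ a = c ∨ b = c := by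
    intro v a b c hva hvb hvc
    by_contra hcon
    push_neg at hcon
    obtain ⟨hab, hac, hbc⟩ := hcon
    obtain ⟨g⟩ := hciso v
    set A : {x // x ∉ ({v} : Set (Fin (m+1)))} := ⟨a, fun h => hva.ne' h⟩
    set B : {x // x ∉ ({v} : Set (Fin (m+1)))} := ⟨b, fun h => hvb.ne' h⟩
    set C : {x // x ∉ ({v} : Set (Fin (m+1)))} := ⟨c, fun h => hvc.ne' h⟩
    have hAB : (G.contractSet {v}).Adj A B :=
      contract_adj_of_via G _ A B v (fun h => hab (congrArg Subtype.val h)) rfl hva.symm hvb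
    have hBC : (G.contractSet {v}).Adj B C :=
      contract_adj_of_via G _ B C v (fun h => hbc (congrArg Subtype.val h)) rfl hvb.symm hvc
    have hAC : (G.contractSet {v}).Adj A C :=
      contract_adj_of_via G _ A C v (fun h => hac (congrArg Subtype.val h)) rfl hva.symm hvc
    exact pathGraph_no_triangle (g.map_rel_iff.mpr hAB) (g.map_rel_iff.mpr hBC)
      (g.map_rel_iff.mpr hAC)
  by_cases hone : ∃ v a, G.Adj v a ∧ ∀ b, G.Adj v b → b = a
  · -- degree-one vertex exists: build the iso
    obtain ⟨v, a, hva, huniq⟩ := hone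
    have ha : a ∉ ({v} : Set (Fin (m + 1))) := fun h => hva.ne' h
    obtain ⟨g₀⟩ := hciso v
    -- k has at most one neighbour in the path graph
    set k : Fin m := g₀ ⟨a, ha⟩ with hk
    have hnbr : ∀ x : Fin m, (pathGraph m).Adj k x → G.Adj a (g₀.symm x).1 ∧ (g₀.symm x).1 ≠ v := by
      intro x hx
      have hx' : (pathGraph m).Adj (g₀ ⟨a, ha⟩) (g₀ (g₀.symm x)) := by
        rwa [RelIso.apply_symm_apply]
      have hH := g₀.map_rel_iff.mp hx'
      rw [contract_single_adj] at hH
      obtain ⟨hne, hor⟩ := hH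
      have hnv : (g₀.symm x).1 ≠ v := fun h => (g₀.symm x).2 h
      rcases hor with h | h | h
      · exact ⟨h, hnv⟩
      · exact absurd (Subtype.ext (huniq _ h.2).symm) hne
      · exact absurd (Subtype.ext (huniq _ h.1.symm).symm) hne
    have hkn : ∀ x y : Fin m, (pathGraph m).Adj k x → (pathGraph m).Adj k y → x = y := by
      intro x y hx hy
      obtain ⟨hax, hxv⟩ := hnbr x hx
      obtain ⟨hay, hyv⟩ := hnbr y hy
      rcases hdeg a (g₀.symm x).1 (g₀.symm y).1 v hax hay hva.symm with h | h | h
      · have : g₀.symm x = g₀.symm y := Subtype.ext h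
        exact g₀.symm.injective this
      · exact absurd h hxv
      · exact absurd h hyv
    have kval : k.val = 0 ∨ k.val = m - 1 := by
      by_contra hcon
      push_neg at hcon
      obtain ⟨h0, h1⟩ := hcon
      have hklt := k.is_lt
      have hx : (pathGraph m).Adj k ⟨k.val - 1, by omega⟩ := by
        rw [pathGraph_adj]; right; simp; omega
      have hy : (pathGraph m).Adj k ⟨k.val + 1, by omega⟩ := by
        rw [pathGraph_adj]; left; simp
      have heq := congrArg Fin.val (hkn _ _ hx hy)
      simp only [] at heq
      omega
    rcases kval with h0 | h1
    · exact build_iso G v a hva huniq ha (g₀.trans (pathGraphRev m))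
        (by rw [RelIso.trans_apply, pathGraphRev_apply_val, ← hk, h0]) (by omega)
    · exact build_iso G v a hva huniq ha g₀ (by rw [← hk]; exact h1) (by omega)
  · -- all vertices have ≥ 2 neighbours: contradiction
    exfalso
    push_neg at hone
    have hm1 : (1 : ℕ) ≤ m := by omega
    set v : Fin (m + 1) := ⟨0, by omega⟩ with hv
    obtain ⟨a, hva⟩ := exists_neighbor hm1 hG v
    obtain ⟨b, hvb, hba⟩ := hone v a hva
    obtain ⟨g⟩ := hciso v
    have claim : ∀ w : {x // x ∉ ({v} : Set (Fin (m+1)))},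
        ∃ p q, p ≠ q ∧ (G.contractSet {v}).Adj w p ∧ (G.contractSet {v}).Adj w q := by
      intro w
      by_cases hwv : G.Adj v w.1
      · have hw_ab : w.1 = a ∨ w.1 = b := by
          rcases hdeg v a b w.1 hva hvb hwv with h | h | h
          · exact absurd h.symm hba
          · exact Or.inl h.symm
          · exact Or.inr h.symm
        have sub : ∀ a' b' : Fin (m + 1), G.Adj v a' → G.Adj v b' → a' ≠ b' → w.1 = a' →
            ∃ p q, p ≠ q ∧ (G.contractSet {v}).Adj w p ∧ (G.contractSet {v}).Adj w q := by
          intro a' b' hva' hvb' hab' hwa'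
          obtain ⟨y, hy, hyv⟩ := hone a' v hva'.symm
          refine ⟨⟨y, fun h => hyv h⟩, ⟨b', fun h => hvb'.ne' h⟩, ?_, ?_, ?_⟩
          · intro h
            have hyb : y = b' := congrArg Subtype.val h
            exact htf v a' b' hva' (hyb ▸ hy) hvb'
          · exact contract_adj_of_adj G _ _ _ (by rw [hwa']; exact hy)
          · refine contract_adj_of_via G _ _ _ v ?_ rfl (by rw [hwa']; exact hva'.symm) hvb'
            intro h
            exact hab' ((congrArg Subtype.val h).symm.trans hwa').symm
        rcases hw_ab with h | h
        · exact sub a b hva hvb (fun hh => hba hh.symm) h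
        · exact sub b a hvb hva hba h
      · obtain ⟨x, hx⟩ := exists_neighbor hm1 hG w.1
        obtain ⟨y, hy, hyx⟩ := hone w.1 x hx
        have hxv : x ≠ v := fun h => hwv (h ▸ hx).symm
        have hyv : y ≠ v := fun h => hwv (h ▸ hy).symm
        refine ⟨⟨x, fun h => hxv h⟩, ⟨y, fun h => hyv h⟩, ?_, ?_, ?_⟩
        · intro h
          exact hyx ((congrArg Subtype.val h).symm)
        · exact contract_adj_of_adj G _ _ _ hx
        · exact contract_adj_of_adj G _ _ _ hy
    obtain ⟨p, q, hpq, hp, hq⟩ := claim (g.symm ⟨0, by omega⟩)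
    have h1 : (pathGraph m).Adj ⟨0, by omega⟩ (g p) := by
      have := g.map_rel_iff.mpr hp
      rwa [RelIso.apply_symm_apply] at this
    have h2 : (pathGraph m).Adj ⟨0, by omega⟩ (g q) := by
      have := g.map_rel_iff.mpr hq
      rwa [RelIso.apply_symm_apply] at this
    rw [pathGraph_adj] at h1 h2
    simp at h1 h2
    apply hpq
    apply g.injective
    apply Fin.ext
    omega

lemma iso_path3 (G : SimpleGraph (Fin 3)) (hG : G.Connected) {x y : Fin 3}
    (hxy : x ≠ y) (hnadj : ¬ G.Adj x y) : Nonempty (G ≃g pathGraph 3) := by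
  have hvxy : x.val ≠ y.val := fun h => hxy (Fin.ext h)
  have hx3 := x.is_lt; have hy3 := y.is_lt
  set z : Fin 3 := ⟨3 - x.val - y.val, by omega⟩ with hz
  obtain ⟨hxz, hzy⟩ : G.Adj x z ∧ G.Adj z y := by
    have hr := hG.preconnected x y
    have hc : Nat.card (Fin 3) ≤ 3 := by simp
    rcases reach_cases hc hr with rfl | hadj | ⟨w, h1, h2⟩
    · exact absurd rfl hxy
    · exact absurd hadj hnadj
    · have hwx : w.val ≠ x.val := fun h => h1.ne' (Fin.ext h)
      have hwy : w.val ≠ y.val := fun h => h2.ne (Fin.ext h)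
      have hw3 := w.is_lt
      have : w = z := by
        apply Fin.ext
        show w.val = 3 - x.val - y.val
        omega
      rw [this] at h1 h2
      exact ⟨h1, h2⟩
  have hxz' : x ≠ z := hxz.ne
  have hzy' : z ≠ y := hzy.ne
  have hnadj' : ¬ G.Adj y x := fun h => hnadj h.symm
  have hxx : ¬ G.Adj x x := G.irrefl
  have hyy : ¬ G.Adj y y := G.irrefl
  have hzz : ¬ G.Adj z z := G.irrefl
  set ψ : Fin 3 → Fin 3 := ![x, z, y] with hψ
  have hinj : Function.Injective ψ := by
    intro i j h
    fin_cases i <;> fin_cases j <;>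
      simp_all [-hz, Matrix.cons_val_zero, Matrix.cons_val_one, Matrix.head_cons] <;>
      first
        | rfl
        | (exfalso; first
            | exact hxz' h
            | exact hxz' h.symm
            | exact hzy' h
            | exact hzy' h.symm
            | exact hxy h
            | exact hxy h.symm)
  have hbij := (Finite.injective_iff_bijective).mp hinj
  refine ⟨(⟨Equiv.ofBijective ψ hbij, ?_⟩ : pathGraph 3 ≃g G).symm⟩
  intro i j
  show G.Adj (ψ i) (ψ j) ↔ (pathGraph 3).Adj i j
  fin_cases i <;> fin_cases j <;>
    simp only [hψ, pathGraph_adj, Matrix.cons_val_zero, Matrix.cons_val_one,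
      Matrix.head_cons, Matrix.cons_val_two, Matrix.tail_cons] <;>
    first
      | (constructor
         · intro h; exfalso
           first | exact hnadj h | exact hnadj' h | exact hxx h | exact hyy h | exact hzz h
         · intro h; exfalso; revert h; decide)
      | (constructor
         · intro _; decide
         · intro _; first | exact hxz | exact hzy | exact hxz.symm | exact hzy.symm)

lemma pathGraph2_adj (a b : Fin 2) : (pathGraph 2).Adj a b ↔ a ≠ b := by
  rw [pathGraph_adj]
  have ha := a.is_lt; have hb := b.is_lt
  constructor
  · intro h; apply Fin.ne_of_val_ne; omega
  · intro h; have : a.val ≠ b.val := fun hh => h (Fin.ext hh); omega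

def isoTopOfComplete {N : ℕ} (G : SimpleGraph (Fin N))
    (h : ∀ x y : Fin N, x ≠ y → G.Adj x y) : G ≃g (⊤ : SimpleGraph (Fin N)) :=
  ⟨Equiv.refl _, by
    intro a b
    simp only [Equiv.refl_apply, top_adj]
    exact ⟨fun hne => h a b hne, fun hadj => hadj.ne⟩⟩

def isoPath2 (G : SimpleGraph (Fin 2)) (hG : G.Connected) : G ≃g pathGraph 2 :=
  ⟨Equiv.refl _, by
    intro a b
    simp only [Equiv.refl_apply]
    rw [pathGraph2_adj, fin2_adj_iff hG]⟩


/-- If `(Γ n)` is a sequence of connected simple graphs on `n` vertices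
such that for every `n` and every nonempty proper subset `S` of the vertices with
connected induced subgraph, `Γ_n|_S ≅ Γ_{|S|}` and `Γ_n/S ≅ Γ_{n-|S|}`, then either
every `Γ n` is a path graph, or every `Γ n` is a complete graph. -/
theorem statement0
    (Γ : ∀ n : ℕ, SimpleGraph (Fin n))
    (hconn : ∀ n, 1 ≤ n → (Γ n).Connected)
    (hind : ∀ n, ∀ S : Set (Fin n), S.Nonempty → S ≠ Set.univ →
      ((Γ n).induce S).Connected →
      Nonempty ((Γ n).induce S ≃g Γ S.ncard))
    (hcontr : ∀ n, ∀ S : Set (Fin n), S.Nonempty → S ≠ Set.univ →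
      ((Γ n).induce S).Connected →
      Nonempty ((Γ n).contractSet S ≃g Γ (n - S.ncard))) :
    (∀ n, 1 ≤ n → Nonempty (Γ n ≃g pathGraph n)) ∨
      (∀ n, 1 ≤ n → Nonempty (Γ n ≃g (⊤ : SimpleGraph (Fin n)))) := by
  classical
  by_cases h3 : ∀ x y : Fin 3, x ≠ y → (Γ 3).Adj x y
  · right
    intro n hn
    rcases n with _ | (_ | (_ | (_ | m)))
    · omega
    · exact ⟨isoFin1 _ _⟩
    · exact ⟨isoTopOfComplete _ (fun x y h => (fin2_adj_iff (hconn 2 (by omega)) x y).mpr h)⟩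
    · exact ⟨isoTopOfComplete _ h3⟩
    · have hcomp : ∀ x y : Fin (m + 4), x ≠ y → (Γ (m + 4)).Adj x y := by
        by_contra hc
        push_neg at hc
        obtain ⟨x, y, hxy, hnadj⟩ := hc
        have hprop : ¬ ∀ a b c : Fin (m + 4), (Γ (m + 4)).Adj a b → (Γ (m + 4)).Adj b c →
            a = c ∨ (Γ (m + 4)).Adj a c := by
          intro hp
          obtain ⟨p⟩ := (hconn (m + 4) (by omega)).preconnected x y
          rcases complete_of_noP3 hp p with rfl | hadj
          · exact hxy rfl
          · exact hnadj hadj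
        push_neg at hprop
        obtain ⟨a, b, c, hab, hbc, hac, hnac⟩ := hprop
        have hS3 : ({a, b, c} : Set (Fin (m + 4))).ncard = 3 :=
          Set.ncard_eq_three.mpr ⟨a, b, c, hab.ne, hac, hbc.ne, rfl⟩
        have hneu : ({a, b, c} : Set (Fin (m + 4))) ≠ Set.univ := by
          intro h
          rw [h, Set.ncard_univ, Nat.card_eq_fintype_card, Fintype.card_fin] at hS3
          omega
        have h' := hind (m + 4) {a, b, c} ⟨a, by simp⟩ hneu
          (induce_triple_connected _ hab hbc)
        rw [hS3] at h'
        obtain ⟨f⟩ := h'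
        have hne' : f ⟨a, by simp⟩ ≠ f ⟨c, by simp⟩ :=
          fun h => hac (congrArg Subtype.val (f.injective h))
        have hadj' := f.map_rel_iff.mp (h3 _ _ hne')
        exact hnac hadj'
      exact ⟨isoTopOfComplete _ hcomp⟩
  · left
    push_neg at h3
    obtain ⟨x, y, hxy, hnadj⟩ := h3
    obtain ⟨iso3⟩ := iso_path3 (Γ 3) (hconn 3 (by omega)) hxy hnadj
    have htf : ∀ m : ℕ, ∀ a b c : Fin (m + 4), (Γ (m + 4)).Adj a b → (Γ (m + 4)).Adj b c →
        (Γ (m + 4)).Adj a c → False := by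
      intro m a b c hab hbc hac
      have hS3 : ({a, b, c} : Set (Fin (m + 4))).ncard = 3 :=
        Set.ncard_eq_three.mpr ⟨a, b, c, hab.ne, hac.ne, hbc.ne, rfl⟩
      have hneu : ({a, b, c} : Set (Fin (m + 4))) ≠ Set.univ := by
        intro h
        rw [h, Set.ncard_univ, Nat.card_eq_fintype_card, Fintype.card_fin] at hS3
        omega
      have h' := hind (m + 4) {a, b, c} ⟨a, by simp⟩ hneu
        (induce_triple_connected _ hab hbc)
      rw [hS3] at h'
      obtain ⟨f⟩ := h'
      have t1 : (Γ 3).Adj (f ⟨a, by simp⟩) (f ⟨b, by simp⟩) := f.map_rel_iff.mpr (by exact hab)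
      have t2 : (Γ 3).Adj (f ⟨b, by simp⟩) (f ⟨c, by simp⟩) := f.map_rel_iff.mpr (by exact hbc)
      have t3 : (Γ 3).Adj (f ⟨a, by simp⟩) (f ⟨c, by simp⟩) := f.map_rel_iff.mpr (by exact hac)
      exact pathGraph_no_triangle (iso3.map_rel_iff.mpr t1) (iso3.map_rel_iff.mpr t2)
        (iso3.map_rel_iff.mpr t3)
    have key : ∀ k : ℕ, Nonempty (Γ (k + 1) ≃g pathGraph (k + 1)) := by
      intro k
      induction k using Nat.strong_induction_on with
      | _ k ih =>
        rcases k with _ | (_ | (_ | j))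
        · exact ⟨isoFin1 _ _⟩
        · exact ⟨isoPath2 _ (hconn 2 (by omega))⟩
        · exact ⟨iso3⟩
        · apply step (by omega) (Γ (j + 4)) (hconn _ (by omega)) (htf j)
          intro v
          have hS1 : ({v} : Set (Fin (j + 4))).ncard = 1 := Set.ncard_singleton v
          have hneu : ({v} : Set (Fin (j + 4))) ≠ Set.univ := by
            intro h
            rw [h, Set.ncard_univ, Nat.card_eq_fintype_card, Fintype.card_fin] at hS1
            omega
          have h' := hcontr (j + 4) {v} ⟨v, rfl⟩ hneu (induce_singleton_connected _ v)
          rw [hS1] at h'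
          have he : j + 4 - 1 = j + 3 := by omega
          rw [he] at h'
          obtain ⟨g1⟩ := h'
          obtain ⟨g2⟩ := ih (j + 2) (by omega)
          exact ⟨g1.trans g2⟩
    intro n hn
    obtain ⟨k, rfl⟩ : ∃ k, n = k + 1 := ⟨n - 1, by omega⟩
    exact key k
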